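/- Let h : [a,b] → ℝ be of bounded variation with inf_{x∈[a,b]} h(x) = 0, and let F, G : [a,b] → ℝ be functions of bounded variation such that the Riemann–Stieltjes integrals ∫ h dF and ∫ h dG exist. Then |∫_a^b h dF − ∫_a^b h dG| ≤ 2·V(h)·‖F − G‖_∞, where V(h) is the total variation of h and ‖·‖_∞ the supremum norm. -/

import Mathlib

open Filter Set

/-- Riemann–Stieltjes sum of `f` with respect to `g` over a tagged partition. -/
noncomputable def RSSum (f g : ℝ → ℝ) (n : ℕ) (t : Fin (n + 1) → ℝ) (ξ : Fin n → ℝ) : ℝ :=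
  ∑ i : Fin n, f (ξ i) * (g (t i.succ) - g (t i.castSucc))

/-- `I` is the Riemann–Stieltjes integral `∫_a^b f dg`. -/
def HasRSIntegral (f g : ℝ → ℝ) (a b I : ℝ) : Prop :=
  ∀ ε > (0 : ℝ), ∃ δ > (0 : ℝ), ∀ (n : ℕ) (t : Fin (n + 1) → ℝ) (ξ : Fin n → ℝ),
    Monotone t → t 0 = a → t (Fin.last n) = b →
    (∀ i : Fin n, t i.castSucc ≤ ξ i ∧ ξ i ≤ t i.succ ∧ t i.succ - t i.castSucc < δ) →
    |RSSum f g n t ξ - I| < ε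

lemma abs_sub_le_sum_Ico (c : ℕ → ℝ) (i j : ℕ) (hij : i ≤ j) :
    |c j - c i| ≤ ∑ l ∈ Finset.Ico i j, |c (l + 1) - c l| := by
  induction j, hij using Nat.le_induction with
  | base => simp
  | succ j hij ih =>
    have : c (j+1) - c i = (c (j+1) - c j) + (c j - c i) := by ring
    rw [this, Finset.sum_Ico_succ_top hij]
    calc |(c (j+1) - c j) + (c j - c i)| ≤ |c (j+1) - c j| + |c j - c i| := abs_add_le _ _
    _ ≤ _ := by linarith [ih]

lemma abel_identity (c d : ℕ → ℝ) (n : ℕ) :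
    ∑ i ∈ Finset.range n, c i * (d (i + 1) - d i)
      = (∑ i ∈ Finset.range n, (c i - c (i + 1)) * d (i + 1)) + c n * d n - c 0 * d 0 := by
  induction n with
  | zero => simp
  | succ n ih => rw [Finset.sum_range_succ, Finset.sum_range_succ, ih]; ring

lemma abel_bound (c d : ℕ → ℝ) (n k : ℕ) (hk : k ≤ n) (M η : ℝ) (hη : 0 ≤ η)
    (hd : ∀ i, |d i| ≤ M) (hck : |c k| ≤ η) :
    |∑ i ∈ Finset.range n, c i * (d (i + 1) - d i)|
      ≤ 2 * (∑ i ∈ Finset.range n, |c (i + 1) - c i|) * M + 2 * η * M := by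
  have hM : 0 ≤ M := le_trans (abs_nonneg _) (hd 0)
  have key : ∑ i ∈ Finset.range n, c i * (d (i + 1) - d i)
      = (∑ i ∈ Finset.range n, (c i - c (i + 1)) * d (i + 1))
        + (c n - c k) * d n - (c 0 - c k) * d 0 + c k * (d n - d 0) := by
    rw [abel_identity]; ring
  rw [key]
  have h1 : |∑ i ∈ Finset.range n, (c i - c (i + 1)) * d (i + 1)|
      ≤ (∑ i ∈ Finset.range n, |c (i + 1) - c i|) * M := by
    calc |∑ i ∈ Finset.range n, (c i - c (i + 1)) * d (i + 1)|
        ≤ ∑ i ∈ Finset.range n, |(c i - c (i + 1)) * d (i + 1)| :=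
          Finset.abs_sum_le_sum_abs _ _
      _ ≤ ∑ i ∈ Finset.range n, |c (i + 1) - c i| * M := by
          apply Finset.sum_le_sum
          intro i _
          rw [abs_mul, abs_sub_comm]
          exact mul_le_mul_of_nonneg_left (hd _) (abs_nonneg _)
      _ = _ := by rw [← Finset.sum_mul]
  have h2 : |c n - c k| ≤ ∑ l ∈ Finset.Ico k n, |c (l + 1) - c l| :=
    abs_sub_le_sum_Ico c k n hk
  have h3 : |c 0 - c k| ≤ ∑ l ∈ Finset.Ico 0 k, |c (l + 1) - c l| := by
    rw [abs_sub_comm]; exact abs_sub_le_sum_Ico c 0 k (Nat.zero_le k)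
  have hsplit : (∑ l ∈ Finset.Ico 0 k, |c (l + 1) - c l|)
      + ∑ l ∈ Finset.Ico k n, |c (l + 1) - c l|
      = ∑ i ∈ Finset.range n, |c (i + 1) - c i| := by
    rw [Finset.sum_Ico_consecutive _ (Nat.zero_le k) hk, ← Finset.range_eq_Ico]
  have h4 : |c k * (d n - d 0)| ≤ η * (2 * M) := by
    rw [abs_mul]
    apply mul_le_mul hck _ (abs_nonneg _) hη
    calc |d n - d 0| ≤ |d n| + |d 0| := abs_sub _ _
    _ ≤ M + M := add_le_add (hd n) (hd 0)
    _ = 2 * M := by ring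
  calc |(∑ i ∈ Finset.range n, (c i - c (i + 1)) * d (i + 1))
        + (c n - c k) * d n - (c 0 - c k) * d 0 + c k * (d n - d 0)|
      ≤ |∑ i ∈ Finset.range n, (c i - c (i + 1)) * d (i + 1)|
        + |(c n - c k) * d n| + |(c 0 - c k) * d 0| + |c k * (d n - d 0)| := by
        have := abs_add_le ((∑ i ∈ Finset.range n, (c i - c (i + 1)) * d (i + 1))
          + (c n - c k) * d n - (c 0 - c k) * d 0) (c k * (d n - d 0))
        have h5 := abs_sub ((∑ i ∈ Finset.range n, (c i - c (i + 1)) * d (i + 1))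
          + (c n - c k) * d n) ((c 0 - c k) * d 0)
        have h6 := abs_add_le (∑ i ∈ Finset.range n, (c i - c (i + 1)) * d (i + 1))
          ((c n - c k) * d n)
        linarith
    _ ≤ (∑ i ∈ Finset.range n, |c (i + 1) - c i|) * M
        + (∑ l ∈ Finset.Ico k n, |c (l + 1) - c l|) * M
        + (∑ l ∈ Finset.Ico 0 k, |c (l + 1) - c l|) * M + η * (2 * M) := by
        have ha : |(c n - c k) * d n| ≤ (∑ l ∈ Finset.Ico k n, |c (l + 1) - c l|) * M := by
          rw [abs_mul]
          exact mul_le_mul h2 (hd n) (abs_nonneg _)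
            (Finset.sum_nonneg fun _ _ => abs_nonneg _)
        have hb : |(c 0 - c k) * d 0| ≤ (∑ l ∈ Finset.Ico 0 k, |c (l + 1) - c l|) * M := by
          rw [abs_mul]
          exact mul_le_mul h3 (hd 0) (abs_nonneg _)
            (Finset.sum_nonneg fun _ _ => abs_nonneg _)
        linarith
    _ ≤ _ := by nlinarith [hsplit]

lemma sum_abs_le_variation {h : ℝ → ℝ} {s : Set ℝ} (hBV : BoundedVariationOn h s)
    (n : ℕ) {u : ℕ → ℝ} (hu : Monotone u) (us : ∀ i, u i ∈ s) :
    ∑ i ∈ Finset.range n, |h (u (i + 1)) - h (u i)| ≤ (eVariationOn h s).toReal := by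
  rw [← ENNReal.ofReal_le_ofReal_iff ENNReal.toReal_nonneg, ENNReal.ofReal_toReal hBV,
    ENNReal.ofReal_sum_of_nonneg (fun i _ => abs_nonneg _)]
  have : ∀ i ∈ Finset.range n, ENNReal.ofReal |h (u (i + 1)) - h (u i)|
      = edist (h (u (i + 1))) (h (u i)) := by
    intro i _
    rw [edist_dist, Real.dist_eq]
  rw [Finset.sum_congr rfl this]
  exact eVariationOn.sum_le (f := h) (n := n) hu us

set_option maxHeartbeats 1000000 in
theorem rs_integral_diff_le
    (a b : ℝ) (hab : a ≤ b) (h F G : ℝ → ℝ)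
    (hhBV : BoundedVariationOn h (Set.Icc a b))
    (hFBV : BoundedVariationOn F (Set.Icc a b))
    (hGBV : BoundedVariationOn G (Set.Icc a b))
    (hinf : IsGLB (h '' Set.Icc a b) 0)
    (I₁ I₂ : ℝ)
    (hI₁ : HasRSIntegral h F a b I₁)
    (hI₂ : HasRSIntegral h G a b I₂) :
    |I₁ - I₂| ≤ 2 * (eVariationOn h (Set.Icc a b)).toReal *
      sSup ((fun t => |F t - G t|) '' Set.Icc a b) := by
  classical
  set V := (eVariationOn h (Set.Icc a b)).toReal with hVdef
  set M := sSup ((fun t => |F t - G t|) '' Set.Icc a b) with hMdef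
  have habmem : a ∈ Set.Icc a b := ⟨le_refl a, hab⟩
  have hbdd : BddAbove ((fun t => |F t - G t|) '' Set.Icc a b) := by
    refine ⟨|F a - G a| + (eVariationOn F (Set.Icc a b)).toReal
      + (eVariationOn G (Set.Icc a b)).toReal, ?_⟩
    rintro y ⟨x, hx, rfl⟩
    have h1 : |F x - F a| ≤ (eVariationOn F (Set.Icc a b)).toReal := by
      rw [← Real.dist_eq]; exact hFBV.dist_le hx habmem
    have h2 : |G x - G a| ≤ (eVariationOn G (Set.Icc a b)).toReal := by
      rw [← Real.dist_eq]; exact hGBV.dist_le hx habmem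
    have h3 : |F x - G x| ≤ |F a - G a| + |F x - F a| + |G x - G a| := by
      have : F x - G x = (F a - G a) + (F x - F a) - (G x - G a) := by ring
      rw [this]
      calc |(F a - G a) + (F x - F a) - (G x - G a)|
          ≤ |(F a - G a) + (F x - F a)| + |G x - G a| := abs_sub _ _
        _ ≤ |F a - G a| + |F x - F a| + |G x - G a| := by
            linarith [abs_add_le (F a - G a) (F x - F a)]
    linarith
  have hMb : ∀ x ∈ Set.Icc a b, |F x - G x| ≤ M := fun x hx => le_csSup hbdd ⟨x, hx, rfl⟩
  have hM0 : (0 : ℝ) ≤ M := le_trans (abs_nonneg _) (hMb a habmem)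
  have hV0 : (0 : ℝ) ≤ V := ENNReal.toReal_nonneg
  have hh0 : ∀ x ∈ Set.Icc a b, 0 ≤ h x := fun x hx => hinf.1 ⟨x, hx, rfl⟩
  refine le_of_forall_pos_le_add fun ε hε => ?_
  set η := ε / (4 * (M + 1)) with hηdef
  have hη : 0 < η := by positivity
  obtain ⟨y, ⟨x₀, hx₀, rfl⟩, h0y, hyη⟩ := hinf.exists_between hη
  obtain ⟨δ₁, hδ₁, hP₁⟩ := hI₁ (ε/4) (by positivity)
  obtain ⟨δ₂, hδ₂, hP₂⟩ := hI₂ (ε/4) (by positivity)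
  set δ := min δ₁ δ₂ with hδdef
  have hδ : 0 < δ := lt_min hδ₁ hδ₂
  obtain ⟨n₀, hn₀⟩ := exists_nat_gt ((b - a) / δ)
  set n := max n₀ 1 with hndef
  have hn1 : 1 ≤ n := le_max_right _ _
  have hnpos : (0 : ℝ) < (n : ℝ) := by exact_mod_cast hn1
  have hnne : (n : ℝ) ≠ 0 := ne_of_gt hnpos
  set w := (b - a) / n with hwdef
  have hw0 : 0 ≤ w := div_nonneg (by linarith) hnpos.le
  have hmesh : w < δ := by
    rw [hwdef, div_lt_iff₀ hnpos]
    have hn₀n : (n₀ : ℝ) ≤ n := by exact_mod_cast le_max_left n₀ 1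
    have : (b - a) / δ < (n : ℝ) := lt_of_lt_of_le hn₀ hn₀n
    calc b - a = (b - a) / δ * δ := by field_simp
      _ < (n : ℝ) * δ := by exact mul_lt_mul_of_pos_right this hδ
      _ = δ * n := by ring
  set t' : ℕ → ℝ := fun i => a + (min i n : ℕ) * w with ht'def
  have ht'mono : Monotone t' := by
    intro i j hij
    simp only [ht'def]
    have : ((min i n : ℕ) : ℝ) ≤ ((min j n : ℕ) : ℝ) := by
      exact_mod_cast min_le_min_right n hij
    nlinarith
  have hnw : (n : ℝ) * w = b - a := by rw [hwdef]; field_simp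
  have ht'0 : t' 0 = a := by simp [ht'def]
  have ht'n : ∀ i, n ≤ i → t' i = b := by
    intro i hi
    simp only [ht'def, min_eq_right hi]
    rw [hnw]; ring
  have ht'mem : ∀ i, t' i ∈ Set.Icc a b := by
    intro i
    constructor
    · simp only [ht'def]
      have : (0 : ℝ) ≤ ((min i n : ℕ) : ℝ) * w := by positivity
      linarith
    · simp only [ht'def]
      have h1 : ((min i n : ℕ) : ℝ) ≤ (n : ℝ) := by exact_mod_cast min_le_right i n
      nlinarith
  have ht'step : ∀ i < n, t' (i + 1) - t' i = w := by
    intro i hi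
    simp only [ht'def, min_eq_left hi.le, min_eq_left (Nat.succ_le_of_lt hi)]
    push_cast
    ring
  set ξ' : ℕ → ℝ := fun i => min (max x₀ (t' i)) (t' (i + 1)) with hξ'def
  have hξ'mono : Monotone ξ' := fun i j hij =>
    min_le_min (max_le_max (le_refl x₀) (ht'mono hij)) (ht'mono (by omega))
  have hξ'lb : ∀ i, t' i ≤ ξ' i := fun i =>
    le_min (le_max_right _ _) (ht'mono (Nat.le_succ i))
  have hξ'ub : ∀ i, ξ' i ≤ t' (i + 1) := fun i => min_le_right _ _
  have hξ'mem : ∀ i, ξ' i ∈ Set.Icc a b := fun i =>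
    ⟨le_trans (ht'mem i).1 (hξ'lb i), le_trans (hξ'ub i) (ht'mem (i + 1)).2⟩
  -- find k ≤ n with ξ' k = x₀
  have hkex : ∃ k ≤ n, ξ' k = x₀ := by
    by_cases hxb : b ≤ x₀
    · refine ⟨n, le_refl n, ?_⟩
      have hx₀b : x₀ = b := le_antisymm hx₀.2 hxb
      simp only [hξ'def, ht'n n (le_refl n), ht'n (n + 1) (Nat.le_succ n), hx₀b,
        max_self, min_self]
    · push_neg at hxb
      set k := Nat.findGreatest (fun i => t' i ≤ x₀) n with hkdef
      have hk : k ≤ n := Nat.findGreatest_le n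
      have hPk : t' k ≤ x₀ :=
        Nat.findGreatest_spec (P := fun i => t' i ≤ x₀) (Nat.zero_le n) (by show t' 0 ≤ x₀; rw [ht'0]; exact hx₀.1)
      have hkn : k < n := by
        rcases lt_or_eq_of_le hk with h' | h'
        · exact h'
        · exfalso; rw [h', ht'n n (le_refl n)] at hPk; linarith
      have hnPk : ¬ (t' (k + 1) ≤ x₀) :=
        Nat.findGreatest_is_greatest (Nat.lt_succ_self k) (Nat.succ_le_of_lt hkn)
      push_neg at hnPk
      refine ⟨k, hk, ?_⟩
      simp only [hξ'def, max_eq_left hPk, min_eq_left hnPk.le]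
  obtain ⟨k, hkn, hξ'k⟩ := hkex
  -- the tagged partition
  set t : Fin (n + 1) → ℝ := fun i => t' i.val with htdef
  set ξ : Fin n → ℝ := fun i => ξ' i.val with hξdef
  have htmono : Monotone t := fun i j hij => ht'mono hij
  have ht0 : t 0 = a := by simp [htdef, ht'0]
  have htlast : t (Fin.last n) = b := ht'n n (le_refl n)
  have htags : ∀ (δ' : ℝ), w < δ' → ∀ i : Fin n,
      t i.castSucc ≤ ξ i ∧ ξ i ≤ t i.succ ∧ t i.succ - t i.castSucc < δ' := by
    intro δ' hδ' i
    have hiv : i.castSucc.val = i.val := rfl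
    have hsv : i.succ.val = i.val + 1 := rfl
    refine ⟨?_, ?_, ?_⟩
    · show t' i.castSucc.val ≤ ξ' i.val
      rw [hiv]; exact hξ'lb i.val
    · show ξ' i.val ≤ t' i.succ.val
      rw [hsv]; exact hξ'ub i.val
    · show t' i.succ.val - t' i.castSucc.val < δ'
      rw [hsv, hiv, ht'step i.val i.isLt]; exact hδ'
  have hS₁ := hP₁ n t ξ htmono ht0 htlast
    (htags δ₁ (lt_of_lt_of_le hmesh (min_le_left _ _)))
  have hS₂ := hP₂ n t ξ htmono ht0 htlast
    (htags δ₂ (lt_of_lt_of_le hmesh (min_le_right _ _)))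
  -- rewrite the RS sums as range sums
  set cc : ℕ → ℝ := fun i => h (ξ' i) with hccdef
  set dd : ℕ → ℝ := fun i => F (t' i) - G (t' i) with hdddef
  have e1 : RSSum h F n t ξ = ∑ i ∈ Finset.range n, h (ξ' i) * (F (t' (i + 1)) - F (t' i)) :=
    Fin.sum_univ_eq_sum_range (fun j => h (ξ' j) * (F (t' (j + 1)) - F (t' j))) n
  have e2 : RSSum h G n t ξ = ∑ i ∈ Finset.range n, h (ξ' i) * (G (t' (i + 1)) - G (t' i)) :=
    Fin.sum_univ_eq_sum_range (fun j => h (ξ' j) * (G (t' (j + 1)) - G (t' j))) n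
  have hdiff : RSSum h F n t ξ - RSSum h G n t ξ
      = ∑ i ∈ Finset.range n, cc i * (dd (i + 1) - dd i) := by
    rw [e1, e2, ← Finset.sum_sub_distrib]
    apply Finset.sum_congr rfl
    intro i _
    simp only [hccdef, hdddef]
    ring
  -- bound the difference of the sums
  have hd : ∀ i, |dd i| ≤ M := fun i => hMb (t' i) (ht'mem i)
  have hck : |cc k| ≤ η := by
    simp only [hccdef, hξ'k]
    rw [abs_of_nonneg (hh0 x₀ hx₀)]
    exact hyη.le
  have habel := abel_bound cc dd n k hkn M η hη.le hd hck
  have hTV : ∑ i ∈ Finset.range n, |cc (i + 1) - cc i| ≤ V := by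
    exact sum_abs_le_variation hhBV n hξ'mono hξ'mem
  have hTVM : 2 * (∑ i ∈ Finset.range n, |cc (i + 1) - cc i|) * M ≤ 2 * V * M := by
    apply mul_le_mul_of_nonneg_right _ hM0
    linarith
  have hηM : 2 * η * M ≤ ε / 2 := by
    have h1 : η * (4 * (M + 1)) = ε := div_mul_cancel₀ _ (by positivity)
    nlinarith [hη.le, hM0]
  have hSbound : |RSSum h F n t ξ - RSSum h G n t ξ| ≤ 2 * V * M + ε / 2 := by
    rw [hdiff]; linarith
  have hA := abs_lt.mp hS₁
  have hB := abs_lt.mp hS₂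
  have hC := abs_le.mp hSbound
  rw [abs_le]
  constructor
  · linarith [hA.1, hA.2, hB.1, hB.2, hC.1, hC.2]
  · linarith [hA.1, hA.2, hB.1, hB.2, hC.1, hC.2]
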